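/- A linear map φ on gl_n(ℂ) (n ≥ 2) satisfies [φ(x), x] = 0 for all x if and only if there exist λ ∈ ℂ and a linear functional σ : gl_n(ℂ) → ℂ such that φ(x) = σ(x)·I_n + λ·x for all x ∈ gl_n(ℂ). -/

import Mathlib

namespace Stmt17Aux

variable {n : ℕ}

noncomputable abbrev E (i j : Fin n) : Matrix (Fin n) (Fin n) ℂ :=
  Matrix.single i j 1

lemma Emul (M : Matrix (Fin n) (Fin n) ℂ) (i j p q : Fin n) :
    (E i j * M) p q = if p = i then M j q else 0 := by
  by_cases h : p = i
  · subst h; simp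
  · simp [h, Matrix.single_mul_apply_of_ne (h := h)]

lemma mulE (M : Matrix (Fin n) (Fin n) ℂ) (i j p q : Fin n) :
    (M * E i j) p q = if q = j then M p i else 0 := by
  by_cases h : q = j
  · subst h; simp
  · simp [h, Matrix.mul_single_apply_of_ne (hbj := h)]

variable (φ : Matrix (Fin n) (Fin n) ℂ →ₗ[ℂ] Matrix (Fin n) (Fin n) ℂ)
  (hc : ∀ x, φ x * x = x * φ x)

include hc

lemma pol (x y : Matrix (Fin n) (Fin n) ℂ) :
    φ x * y + φ y * x = y * φ x + x * φ y := by
  have h1 := hc (x + y)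
  rw [map_add] at h1
  have h2 := hc x
  have h3 := hc y
  calc φ x * y + φ y * x
      = (φ x + φ y) * (x + y) - φ x * x - φ y * y := by noncomm_ring
    _ = (x + y) * (φ x + φ y) - x * φ x - y * φ y := by rw [h1, h2, h3]
    _ = y * φ x + x * φ y := by noncomm_ring

lemma star (i j k l p q : Fin n) :
    (if q = l then φ (E i j) p k else 0) + (if q = j then φ (E k l) p i else 0) =
    (if p = k then φ (E i j) l q else 0) + (if p = i then φ (E k l) j q else 0) := by
  have h := congrFun (congrFun (pol φ hc (E i j) (E k l)) p) q
  simpa [Matrix.add_apply, mulE, Emul] using h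

lemma comm (i j p q : Fin n) :
    (if q = j then φ (E i j) p i else 0) = (if p = i then φ (E i j) j q else 0) := by
  have h := congrFun (congrFun (hc (E i j)) p) q
  simpa [mulE, Emul] using h

lemma F1 (i j p : Fin n) (hp : p ≠ i) : φ (E i j) p i = 0 := by
  simpa [hp] using comm φ hc i j p j

lemma F2 (i j q : Fin n) (hq : q ≠ j) : φ (E i j) j q = 0 := by
  simpa [hq] using (comm φ hc i j i q).symm

lemma F3 (i j : Fin n) : φ (E i j) i i = φ (E i j) j j := by
  simpa using comm φ hc i j i j

lemma O (i j p q : Fin n) (hpq : p ≠ q) (hne : ¬(p = i ∧ q = j)) :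
    φ (E i j) p q = 0 := by
  by_cases hqj : q = j
  · subst hqj
    have hpi : p ≠ i := fun h => hne ⟨h, rfl⟩
    have s := star φ hc i q p p p q
    have h2 : φ (E p p) p i = 0 := F2 φ hc p p i (Ne.symm hpi)
    simpa [Ne.symm hpq, hpi, h2] using s.symm
  · by_cases hqi : q = i
    · subst hqi; exact F1 φ hc q j p hpq
    · have s := star φ hc i j q q p q
      by_cases hpi : p = i
      · subst hpi
        have h1 : φ (E q q) j q = 0 := F1 φ hc q q j (Ne.symm hqj)
        simpa [hqj, hpq, h1] using s
      · simpa [hqj, hpq, hpi] using s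

lemma D (i j p : Fin n) (hij : i ≠ j) : φ (E i j) p p = φ (E i j) j j := by
  by_cases hpj : p = j
  · subst hpj; rfl
  · have s := star φ hc i j j p j p
    simpa [hpj, Ne.symm hij, hij] using s.symm

lemma Dii (i p : Fin n) (hpi : p ≠ i) :
    φ (E i i) i i = φ (E i i) p p + φ (E i p) i p := by
  have s := star φ hc i i i p i p
  simpa [hpi] using s

lemma L (i j l : Fin n) (hij : i ≠ j) (hjl : j ≠ l) :
    φ (E i j) i j = φ (E j l) j l := by
  have s := star φ hc i j j l i l
  simpa [hij, Ne.symm hjl] using s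

lemma Lconst (i j k l : Fin n) (hij : i ≠ j) (hkl : k ≠ l) :
    φ (E i j) i j = φ (E k l) k l := by
  by_cases hjk : j = k
  · subst hjk; exact L φ hc i j l hij hkl
  · calc φ (E i j) i j = φ (E j k) j k := L φ hc i j k hij hjk
      _ = φ (E k l) k l := L φ hc j k l hjk hkl

end Stmt17Aux

theorem stmt_17 (n : ℕ) (hn : 2 ≤ n)
    (φ : Matrix (Fin n) (Fin n) ℂ →ₗ[ℂ] Matrix (Fin n) (Fin n) ℂ) :
    (∀ x : Matrix (Fin n) (Fin n) ℂ, φ x * x - x * φ x = 0) ↔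
    ∃ (lam : ℂ) (σ : Matrix (Fin n) (Fin n) ℂ →ₗ[ℂ] ℂ),
      ∀ x : Matrix (Fin n) (Fin n) ℂ,
        φ x = σ x • (1 : Matrix (Fin n) (Fin n) ℂ) + lam • x := by
  constructor
  · intro H
    have hc : ∀ x, φ x * x = x * φ x := fun x => sub_eq_zero.mp (H x)
    open Stmt17Aux in
    set i0 : Fin n := ⟨0, by omega⟩ with hi0
    set i1 : Fin n := ⟨1, by omega⟩ with hi1
    have h01 : i0 ≠ i1 := by simp [hi0, hi1, Fin.ext_iff]
    set lam : ℂ := φ (E i0 i1) i0 i1 with hlam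
    -- every basis element maps to c • 1 + lam • basis element
    have Eapply : ∀ i j p q : Fin n, (E i j) p q = if i = p ∧ j = q then (1:ℂ) else 0 :=
      fun i j p q => rfl
    have key : ∀ i j : Fin n, ∃ c : ℂ,
        φ (E i j) = c • (1 : Matrix (Fin n) (Fin n) ℂ) + lam • E i j := by
      intro i j
      by_cases hij : i = j
      · subst hij
        refine ⟨φ (E i i) i i - lam, ?_⟩
        apply Matrix.ext; intro p q
        rw [Matrix.add_apply, Matrix.smul_apply, Matrix.smul_apply, Matrix.one_apply, Eapply,
          smul_eq_mul, smul_eq_mul]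
        by_cases hpq : p = q
        · subst hpq
          by_cases hpi : p = i
          · subst hpi
            simp
          · have hDii := Dii φ hc i p hpi
            have hL : φ (E i p) i p = lam := Lconst φ hc i p i0 i1 (Ne.symm hpi) h01
            rw [hL] at hDii
            have hip : ¬(i = p ∧ i = p) := fun h => hpi h.1.symm
            rw [if_pos rfl, if_neg hip, hDii]
            ring
        · have h0 : φ (E i i) p q = 0 :=
            O φ hc i i p q hpq (fun h => hpq (h.1.trans h.2.symm))
          have hip : ¬(i = p ∧ i = q) := fun h => hpq (h.1.symm.trans h.2)
          simp [h0, hpq, hip]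
      · refine ⟨φ (E i j) j j, ?_⟩
        apply Matrix.ext; intro p q
        rw [Matrix.add_apply, Matrix.smul_apply, Matrix.smul_apply, Matrix.one_apply, Eapply,
          smul_eq_mul, smul_eq_mul]
        by_cases hpq : p = q
        · subst hpq
          have hD := D φ hc i j p hij
          have hip : ¬(i = p ∧ j = p) := fun h => hij (h.1.trans h.2.symm)
          simp [hD, hip]
        · by_cases hpij : p = i ∧ q = j
          · obtain ⟨h1, h2⟩ := hpij
            subst h1; subst h2
            have hL : φ (E p q) p q = lam := Lconst φ hc p q i0 i1 hpq h01
            simp [hL, hpq]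
          · have h0' : φ (E i j) p q = 0 := O φ hc i j p q hpq hpij
            have hEne : ¬(i = p ∧ j = q) := fun h => hpij ⟨h.1.symm, h.2.symm⟩
            simp [h0', hpq, hEne]
    -- scalar existence for all x
    have keyx : ∀ x : Matrix (Fin n) (Fin n) ℂ, ∃ c : ℂ,
        φ x = c • (1 : Matrix (Fin n) (Fin n) ℂ) + lam • x := by
      have Sadd : ∀ a b : Matrix (Fin n) (Fin n) ℂ,
          (∃ c : ℂ, φ a = c • (1:Matrix (Fin n) (Fin n) ℂ) + lam • a) →
          (∃ c : ℂ, φ b = c • (1:Matrix (Fin n) (Fin n) ℂ) + lam • b) →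
          (∃ c : ℂ, φ (a + b) = c • (1:Matrix (Fin n) (Fin n) ℂ) + lam • (a + b)) := by
        rintro a b ⟨ca, hca⟩ ⟨cb, hcb⟩
        exact ⟨ca + cb, by rw [map_add, hca, hcb]; module⟩
      have Szero : (∃ c : ℂ, φ 0 = c • (1:Matrix (Fin n) (Fin n) ℂ) + lam • (0:Matrix (Fin n) (Fin n) ℂ)) :=
        ⟨0, by simp⟩
      intro x
      rw [Matrix.matrix_eq_sum_single x]
      refine Finset.sum_induction _ _ Sadd Szero ?_
      intro p _
      refine Finset.sum_induction _ _ Sadd Szero ?_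
      intro q _
      obtain ⟨c, hcq⟩ := key p q
      refine ⟨x p q * c, ?_⟩
      have : Matrix.single p q (x p q) = (x p q) • E p q := by
        simp
      rw [this, map_smul, hcq]
      module
    -- construct σ
    refine ⟨lam, ⟨⟨fun x => φ x i0 i0 - lam * x i0 i0, ?_⟩, ?_⟩, ?_⟩
    · intro a b; simp [Matrix.add_apply]; ring
    · intro r a; simp [Matrix.smul_apply, smul_eq_mul]; ring
    · intro x
      obtain ⟨c, hcx⟩ := keyx x
      have hσ : φ x i0 i0 - lam * x i0 i0 = c := by
        rw [hcx]; simp [Matrix.add_apply, Matrix.smul_apply, Matrix.one_apply, smul_eq_mul]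
      show φ x = (φ x i0 i0 - lam * x i0 i0) • 1 + lam • x
      rw [hσ, hcx]
  · rintro ⟨lam, σ, hσ⟩ x
    rw [hσ x]
    rw [add_mul, mul_add, Matrix.smul_mul, Matrix.mul_smul, Matrix.smul_mul, Matrix.mul_smul,
      one_mul, mul_one]
    abel
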